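/- Fix n ≥ 1 and let v ∈ S_{2n} be an n-Grassmannian permutation (taking d = n). Then v is symmetric, i.e., v(2n+1−i) = 2n+1−v(i) for i = 1,…,n, if and only if its associated partition λ_v is symmetric, i.e., (λ_v)^t = λ_v. -/

import Mathlib

/-- The value of a permutation of `Fin n` at the (1-indexed) position `k`
(as a 1-indexed value in `{1, …, n}`); `0` if `k` is out of range. -/
def permVal1 {n : ℕ} (v : Equiv.Perm (Fin n)) (k : ℕ) : ℕ :=
  if h : 0 < k ∧ k ≤ n then (v ⟨k - 1, by omega⟩).val + 1 else 0

/-- `v` is `d`-Grassmannian: `v(1) < ⋯ < v(d)` and `v(d+1) < ⋯ < v(n)`. -/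
def IsGrassmannian {n : ℕ} (d : ℕ) (v : Equiv.Perm (Fin n)) : Prop :=
  (∀ i j : ℕ, 1 ≤ i → i < j → j ≤ d → permVal1 v i < permVal1 v j) ∧
  (∀ i j : ℕ, d + 1 ≤ i → i < j → j ≤ n → permVal1 v i < permVal1 v j)

/-- The set of inversions of `v`: pairs `(i, j)` with `1 ≤ i < j ≤ n` and `v(i) > v(j)`. -/
def invPairs {n : ℕ} (v : Equiv.Perm (Fin n)) : Finset (ℕ × ℕ) :=
  ((Finset.Icc 1 n) ×ˢ (Finset.Icc 1 n)).filter
    (fun p => p.1 < p.2 ∧ permVal1 v p.2 < permVal1 v p.1)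

section aux
variable {n : ℕ}

lemma pv_bounds (v : Equiv.Perm (Fin (2*n))) {k : ℕ} (h1 : 1 ≤ k) (h2 : k ≤ 2*n) :
    1 ≤ permVal1 v k ∧ permVal1 v k ≤ 2*n := by
  unfold permVal1
  rw [dif_pos ⟨h1, h2⟩]
  have := (v ⟨k-1, by omega⟩).isLt
  omega

lemma pv_inj (v : Equiv.Perm (Fin (2*n))) {k l : ℕ} (hk1 : 1 ≤ k) (hk2 : k ≤ 2*n)
    (hl1 : 1 ≤ l) (hl2 : l ≤ 2*n)
    (h : permVal1 v k = permVal1 v l) : k = l := by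
  unfold permVal1 at h
  rw [dif_pos ⟨hk1, hk2⟩, dif_pos ⟨hl1, hl2⟩] at h
  have h2 : v ⟨k-1, by omega⟩ = v ⟨l-1, by omega⟩ := Fin.ext (by omega)
  have h3 := congrArg Fin.val (v.injective h2)
  simp only at h3
  omega

lemma pv_image (v : Equiv.Perm (Fin (2*n))) :
    (Finset.Icc 1 (2*n)).image (permVal1 v) = Finset.Icc 1 (2*n) := by
  apply Finset.Subset.antisymm
  · intro a ha
    simp only [Finset.mem_image, Finset.mem_Icc] at ha ⊢
    obtain ⟨k, ⟨hk1, hk2⟩, rfl⟩ := ha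
    exact pv_bounds v hk1 hk2
  · intro a ha
    simp only [Finset.mem_Icc] at ha
    simp only [Finset.mem_image, Finset.mem_Icc]
    have hlt : (v.symm ⟨a-1, by omega⟩).val < 2*n := (v.symm ⟨a-1, by omega⟩).isLt
    refine ⟨(v.symm ⟨a-1, by omega⟩).val + 1, ⟨by omega, by omega⟩, ?_⟩
    unfold permVal1
    rw [dif_pos ⟨by omega, by omega⟩]
    have he : (⟨(v.symm ⟨a-1, by omega⟩).val + 1 - 1, by omega⟩ : Fin (2*n))
        = v.symm ⟨a-1, by omega⟩ := Fin.ext (by simp)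
    rw [he, Equiv.apply_symm_apply]
    simp only [Fin.val_mk]
    omega

lemma pv_count (v : Equiv.Perm (Fin (2*n))) {a : ℕ} (ha : a ≤ 2*n) :
    ((Finset.Icc 1 (2*n)).filter (fun k => permVal1 v k ≤ a)).card = a := by
  have hinj : Set.InjOn (permVal1 v)
      ((Finset.Icc 1 (2*n)).filter (fun k => permVal1 v k ≤ a) : Finset ℕ) := by
    intro x hx y hy h
    simp only [Finset.coe_filter, Set.mem_setOf_eq, Finset.mem_Icc] at hx hy
    exact pv_inj v hx.1.1 hx.1.2 hy.1.1 hy.1.2 h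
  have h1 := Finset.card_image_of_injOn hinj
  have h2 : ((Finset.Icc 1 (2*n)).filter (fun k => permVal1 v k ≤ a)).image (permVal1 v)
      = Finset.Icc 1 a := by
    have h3 := Finset.filter_image (s := Finset.Icc 1 (2*n)) (f := permVal1 v)
      (p := fun x => x ≤ a)
    rw [pv_image] at h3
    rw [← h3]
    ext x
    simp only [Finset.mem_filter, Finset.mem_Icc]
    omega
  rw [h2] at h1
  simp at h1
  omega

end aux
section aux2
variable {n : ℕ} {v : Equiv.Perm (Fin (2*n))} (hv : IsGrassmannian n v)

include hv

lemma mono1_iff {k l : ℕ} (hk1 : 1 ≤ k) (hk2 : k ≤ n) (hl1 : 1 ≤ l) (hl2 : l ≤ n) :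
    permVal1 v k ≤ permVal1 v l ↔ k ≤ l := by
  constructor
  · intro h
    by_contra hc
    exact absurd (hv.1 l k hl1 (by omega) hk2) (by omega)
  · intro h
    rcases eq_or_lt_of_le h with rfl | h'
    · exact le_refl _
    · exact le_of_lt (hv.1 k l hk1 h' hl2)

lemma mono2_iff {k l : ℕ} (hk1 : n+1 ≤ k) (hk2 : k ≤ 2*n) (hl1 : n+1 ≤ l) (hl2 : l ≤ 2*n) :
    permVal1 v k ≤ permVal1 v l ↔ k ≤ l := by
  constructor
  · intro h
    by_contra hc
    exact absurd (hv.2 l k hl1 (by omega) hk2) (by omega)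
  · intro h
    rcases eq_or_lt_of_le h with rfl | h'
    · exact le_refl _
    · exact le_of_lt (hv.2 k l hk1 h' hl2)

omit hv in
lemma split_count (p : ℕ → Prop) [DecidablePred p] :
    ((Finset.Icc 1 (2*n)).filter p).card
      = ((Finset.Icc 1 n).filter p).card + ((Finset.Icc (n+1) (2*n)).filter p).card := by
  have hu : Finset.Icc 1 n ∪ Finset.Icc (n+1) (2*n) = Finset.Icc 1 (2*n) := by
    ext x; simp only [Finset.mem_union, Finset.mem_Icc]; omega
  have hd : Disjoint ((Finset.Icc 1 n).filter p) ((Finset.Icc (n+1) (2*n)).filter p) := by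
    rw [Finset.disjoint_left]
    intro x hx hx'
    simp only [Finset.mem_filter, Finset.mem_Icc] at hx hx'
    omega
  rw [← hu, Finset.filter_union, Finset.card_union_of_disjoint hd]

/-- Counts for the "t_j" values. -/
lemma tcount {j : ℕ} (hj1 : 1 ≤ j) (hj2 : j ≤ n) :
    ((Finset.Icc 1 n).filter (fun k => permVal1 v k ≤ permVal1 v (n+j))).card + j
      = permVal1 v (n+j)
    ∧ j ≤ permVal1 v (n+j) ∧ permVal1 v (n+j) ≤ n + j := by
  have hb := pv_bounds v (k := n+j) (by omega) (by omega)
  have htot := pv_count v (a := permVal1 v (n+j)) hb.2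
  rw [split_count] at htot
  have h2 : (Finset.Icc (n+1) (2*n)).filter (fun k => permVal1 v k ≤ permVal1 v (n+j))
      = Finset.Icc (n+1) (n+j) := by
    ext m
    simp only [Finset.mem_filter, Finset.mem_Icc]
    constructor
    · rintro ⟨⟨hm1, hm2⟩, hm3⟩
      exact ⟨hm1, by rw [mono2_iff hv hm1 hm2 (by omega) (by omega)] at hm3; exact hm3⟩
    · rintro ⟨hm1, hm2⟩
      refine ⟨⟨hm1, by omega⟩, ?_⟩
      rw [mono2_iff hv hm1 (by omega) (by omega) (by omega)]
      exact hm2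
  rw [h2, Nat.card_Icc] at htot
  have hle : ((Finset.Icc 1 n).filter
      (fun k => permVal1 v k ≤ permVal1 v (n+j))).card ≤ n := by
    calc _ ≤ (Finset.Icc 1 n).card := Finset.card_filter_le _ _
    _ = n := by rw [Nat.card_Icc]; omega
  omega

/-- Counts for the "s_k" values. -/
lemma scount {k : ℕ} (hk1 : 1 ≤ k) (hk2 : k ≤ n) :
    k + ((Finset.Icc (n+1) (2*n)).filter (fun m => permVal1 v m ≤ permVal1 v k)).card
      = permVal1 v k := by
  have hb := pv_bounds v (k := k) hk1 (by omega)
  have htot := pv_count v (a := permVal1 v k) hb.2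
  rw [split_count] at htot
  have h1 : (Finset.Icc 1 n).filter (fun m => permVal1 v m ≤ permVal1 v k)
      = Finset.Icc 1 k := by
    ext m
    simp only [Finset.mem_filter, Finset.mem_Icc]
    constructor
    · rintro ⟨⟨hm1, hm2⟩, hm3⟩
      exact ⟨hm1, by rw [mono1_iff hv hm1 hm2 hk1 hk2] at hm3; exact hm3⟩
    · rintro ⟨hm1, hm2⟩
      refine ⟨⟨hm1, by omega⟩, ?_⟩
      rw [mono1_iff hv hm1 (by omega) hk1 hk2]
      exact hm2
  rw [h1, Nat.card_Icc] at htot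
  omega

/-- Key: `k + j ≤ v(k)` iff `v(n+j) < v(k)`, for `k, j ∈ [1, n]`. -/
lemma key_iff {k j : ℕ} (hk1 : 1 ≤ k) (hk2 : k ≤ n) (hj1 : 1 ≤ j) (hj2 : j ≤ n) :
    k + j ≤ permVal1 v k ↔ permVal1 v (n+j) < permVal1 v k := by
  have hs := scount hv hk1 hk2
  constructor
  · intro h
    have hne : permVal1 v (n+j) ≠ permVal1 v k := by
      intro he
      have := pv_inj v (k := n+j) (l := k) (by omega) (by omega) (by omega) (by omega) he
      omega
    rcases lt_or_ge (permVal1 v (n+j)) (permVal1 v k) with h' | h'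
    · exact h'
    exfalso
    have hsub : (Finset.Icc (n+1) (2*n)).filter (fun m => permVal1 v m ≤ permVal1 v k)
        ⊆ Finset.Icc (n+1) (n+j-1) := by
      intro m hm
      simp only [Finset.mem_filter, Finset.mem_Icc] at hm ⊢
      refine ⟨hm.1.1, ?_⟩
      by_contra hc
      have : permVal1 v (n+j) ≤ permVal1 v m := by
        rw [mono2_iff hv (by omega) (by omega) hm.1.1 hm.1.2]; omega
      omega
    have hcard := Finset.card_le_card hsub
    rw [Nat.card_Icc] at hcard
    omega
  · intro h
    have hsub : Finset.Icc (n+1) (n+j)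
        ⊆ (Finset.Icc (n+1) (2*n)).filter (fun m => permVal1 v m ≤ permVal1 v k) := by
      intro m hm
      simp only [Finset.mem_Icc] at hm
      simp only [Finset.mem_filter, Finset.mem_Icc]
      refine ⟨⟨hm.1, by omega⟩, ?_⟩
      have : permVal1 v m ≤ permVal1 v (n+j) := by
        rw [mono2_iff hv hm.1 (by omega) (by omega) (by omega)]; exact hm.2
      omega
    have hcard := Finset.card_le_card hsub
    rw [Nat.card_Icc] at hcard
    omega

/-- Main count: `#{k ∈ [1,n] : k + j ≤ v(k)} = n + j − v(n+j)`. -/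
lemma main_count {j : ℕ} (hj1 : 1 ≤ j) (hj2 : j ≤ n) :
    ((Finset.Icc 1 n).filter (fun k => k + j ≤ permVal1 v k)).card
      = n + j - permVal1 v (n+j) := by
  have ht := tcount hv hj1 hj2
  have he : (Finset.Icc 1 n).filter (fun k => k + j ≤ permVal1 v k)
      = (Finset.Icc 1 n).filter (fun k => ¬ permVal1 v k ≤ permVal1 v (n+j)) := by
    apply Finset.filter_congr
    intro k hk
    simp only [Finset.mem_Icc] at hk
    rw [key_iff hv hk.1 hk.2 hj1 hj2]
    omega
  rw [he]
  have hsum := Finset.card_filter_add_card_filter_not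
    (s := Finset.Icc 1 n) (p := fun k => permVal1 v k ≤ permVal1 v (n+j))
  rw [Nat.card_Icc] at hsum
  omega

end aux2
lemma reindex_count {n : ℕ} (P : ℕ → Prop) [DecidablePred P] :
    ((Finset.Icc 1 n).filter (fun i => P (n+1-i))).card
      = ((Finset.Icc 1 n).filter P).card := by
  apply Finset.card_nbij' (i := fun i => n+1-i) (j := fun k => n+1-k)
  · intro a ha
    simp only [Finset.mem_coe, Finset.mem_filter, Finset.mem_Icc] at ha ⊢
    exact ⟨by omega, ha.2⟩
  · intro a ha
    simp only [Finset.mem_coe, Finset.mem_filter, Finset.mem_Icc] at ha ⊢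
    refine ⟨by omega, ?_⟩
    have : n + 1 - (n + 1 - a) = a := by omega
    rw [this]
    exact ha.2
  · intro a ha
    simp only [Finset.mem_coe, Finset.mem_filter, Finset.mem_Icc] at ha
    dsimp only
    omega
  · intro a ha
    simp only [Finset.mem_coe, Finset.mem_filter, Finset.mem_Icc] at ha
    dsimp only
    omega


/-- An `n`-Grassmannian permutation `v ∈ S_{2n}` is symmetric
(`v(2n+1−i) = 2n+1−v(i)` for `i = 1,…,n`) if and only if its associated partition `λ_v`
is symmetric (`(λ_v)ᵗ = λ_v`, i.e. `#{i : (λ_v)ᵢ ≥ j} = (λ_v)_j` for `j = 1,…,n`,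
where `(λ_v)ᵢ = v(n+1−i) − (n+1−i)`). -/
theorem stmt_7 (n : ℕ) (hn : 1 ≤ n) (v : Equiv.Perm (Fin (2 * n)))
    (hv : IsGrassmannian n v) :
    (∀ i : ℕ, 1 ≤ i → i ≤ n →
        permVal1 v (2 * n + 1 - i) = 2 * n + 1 - permVal1 v i)
    ↔ (∀ j : ℕ, 1 ≤ j → j ≤ n →
        ((Finset.Icc 1 n).filter
            (fun i => (n + 1 - i) + j ≤ permVal1 v (n + 1 - i))).card
          = permVal1 v (n + 1 - j) - (n + 1 - j)) := by
  have hcard : ∀ j : ℕ, 1 ≤ j → j ≤ n →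
      ((Finset.Icc 1 n).filter
          (fun i => (n + 1 - i) + j ≤ permVal1 v (n + 1 - i))).card
        = n + j - permVal1 v (n + j) := by
    intro j hj1 hj2
    rw [reindex_count (P := fun k => k + j ≤ permVal1 v k)]
    exact main_count hv hj1 hj2
  constructor
  · intro h j hj1 hj2
    rw [hcard j hj1 hj2]
    have hsym := h (n + 1 - j) (by omega) (by omega)
    have harg : 2 * n + 1 - (n + 1 - j) = n + j := by omega
    rw [harg] at hsym
    have ht := (tcount hv hj1 hj2).2
    have hs := scount hv (k := n + 1 - j) (by omega) (by omega)
    have hb := pv_bounds v (k := n + 1 - j) (by omega) (by omega)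
    omega
  · intro h i hi1 hi2
    have hp := h (n + 1 - i) (by omega) (by omega)
    rw [hcard (n + 1 - i) (by omega) (by omega)] at hp
    have harg1 : n + (n + 1 - i) = 2 * n + 1 - i := by omega
    have harg2 : n + 1 - (n + 1 - i) = i := by omega
    rw [harg1, harg2] at hp
    have ht := (tcount hv (j := n + 1 - i) (by omega) (by omega)).2
    rw [harg1] at ht
    have hs := scount hv hi1 hi2
    have hb := pv_bounds v (k := i) (by omega) (by omega)
    omega
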